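/- Let N be a positive integer and let f₁, f₂ : ℝ² → ℂ be functions of the form f_i = ∑_{j=1}^{n_i} c_j^i · 1_{R_j^i}, where c_j^i ∈ ℂ, each R_j^i = [a_j^i, b_j^i] × [c_j^i{}', d_j^i] is an axis-parallel closed rectangle contained in [0,1)² with a_j^i < b_j^i and c_j^i{}' < d_j^i, and 4 n_i ≤ N (so each f_i involves at most N rectangle vertices in total). If the Fourier transforms satisfy 𝓕f₁(m, n) = 𝓕f₂(m, n) for every (m, n) in the sampling set A_{2N}(1) = ⋃_{r=1}^{2N} [2⌊2N/r⌋]₀ × [2r]₀, then f₁ = f₂ almost everywhere on ℝ². -/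

import Mathlib

open Complex Real Finset

/-- The sampling set `A_N(D) = ⋃_{r=1}^{N} [2⌊N/r⌋D]₀ × [2rD]₀ ⊆ ℤ²`
(represented as a finite set of pairs of natural numbers). -/
def sampSet (N D : ℕ) : Finset (ℕ × ℕ) :=
  (Finset.Icc 1 N).biUnion fun r =>
    Finset.range (2 * (N / r) * D + 1) ×ˢ Finset.range (2 * r * D + 1)

/-- The Fourier transform `𝓕f(t) = ∫_{ℝ²} f(x) e^{−2πi⟨x,t⟩} dx` of a function
`f : ℝ² → ℂ`. -/
noncomputable def fourierTransform2 (f : ℝ × ℝ → ℂ) (t : ℝ × ℝ) : ℂ :=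
  ∫ x : ℝ × ℝ, f x * Complex.exp (-(2 * Real.pi * Complex.I * (x.1 * t.1 + x.2 * t.2)))

noncomputable def eu (x : ℝ) : ℂ := Complex.exp (-(2 * Real.pi * Complex.I * x))

lemma eu_ne_zero (x : ℝ) : eu x ≠ 0 := Complex.exp_ne_zero _

lemma eu_injOn : Set.InjOn eu (Set.Ico (0:ℝ) 1) := by
  intro p hp q hq h
  rw [eu, eu, Complex.exp_eq_exp_iff_exists_int] at h
  obtain ⟨n, hn⟩ := h
  have hπ : (2 * (Real.pi:ℂ) * Complex.I) ≠ 0 := by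
    simp [Real.pi_ne_zero, Complex.I_ne_zero]
  have h2 : (p : ℂ) = (q : ℂ) - n := by
    apply mul_left_cancel₀ hπ
    linear_combination -hn
  have h3 : p = q - n := by exact_mod_cast h2
  have h4 : (n : ℝ) = q - p := by linarith
  have h5 : n = 0 := by
    obtain ⟨hp1, hp2⟩ := hp
    obtain ⟨hq1, hq2⟩ := hq
    have h6 : |(n:ℝ)| < 1 := by
      rw [h4, abs_lt]; exact ⟨by linarith, by linarith⟩
    have h7 : ((|n| : ℤ) : ℝ) < 1 := by rw [Int.cast_abs]; exact h6
    have h8 : |n| < 1 := by exact_mod_cast h7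
    rw [abs_lt] at h8
    omega
  rw [h5] at h4; simp at h4; linarith

lemma vand_finset {α : Type*} [DecidableEq α] (s : Finset α) (z : α → ℂ)
    (hinj : Set.InjOn z s) (h0 : ∀ a ∈ s, z a ≠ 0) (d : α → ℂ)
    (h : ∀ m : ℕ, 1 ≤ m → m ≤ s.card → ∑ a ∈ s, d a * z a ^ m = 0) :
    ∀ a ∈ s, d a = 0 := by
  intro a ha
  set k := s.card with hk
  let e := s.equivFin
  set f : Fin k → ℂ := fun i => z (e.symm i) with hf
  have hfinj : Function.Injective f := by
    intro i j hij
    have := hinj (e.symm i).2 (e.symm j).2 hij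
    exact e.symm.injective (Subtype.ext this)
  set v : Fin k → ℂ := fun i => d (e.symm i) * z (e.symm i) with hv
  have hzero : v = 0 := by
    apply Matrix.eq_zero_of_forall_pow_sum_mul_pow_eq_zero hfinj
    intro i
    have key : ∑ j : Fin k, v j * f j ^ (i : ℕ) = ∑ a ∈ s, d a * z a ^ ((i:ℕ)+1) := by
      rw [← Finset.sum_coe_sort s (fun a => d a * z a ^ ((i:ℕ)+1))]
      rw [← Equiv.sum_comp e.symm (fun a : s => d a.1 * z a.1 ^ ((i:ℕ)+1))]
      apply Finset.sum_congr rfl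
      intro j _
      simp only [hv, hf, pow_succ]
      ring
    rw [key, h ((i:ℕ)+1) (Nat.succ_le_succ (Nat.zero_le _)) (Nat.succ_le_of_lt i.2)]
  have : v (e ⟨a, ha⟩) = 0 := by rw [hzero]; rfl
  simp only [hv, Equiv.symm_apply_apply] at this
  rcases mul_eq_zero.mp this with h' | h'
  · exact h'
  · exact absurd h' (h0 a ha)

lemma core {ι : Type*} [Fintype ι] (N : ℕ)
    (x y : ι → ℝ) (w : ι → ℂ)
    (hx : ∀ i, x i ∈ Set.Ico (0:ℝ) 1) (hy : ∀ i, y i ∈ Set.Ico (0:ℝ) 1)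
    (hcard : Fintype.card ι ≤ 2 * N)
    (hvan : ∀ m n : ℕ, 1 ≤ m → 1 ≤ n → (m, n) ∈ sampSet (2 * N) 1 →
      ∑ i, w i * eu (x i) ^ m * eu (y i) ^ n = 0) :
    ∀ p q : ℝ, ∑ i ∈ Finset.univ.filter (fun i => x i = p ∧ y i = q), w i = 0 := by
  classical
  set G : ℝ → ℝ → ℂ := fun p q => ∑ i ∈ Finset.univ.filter (fun i => x i = p ∧ y i = q), w i
    with hG
  set X : Finset ℝ := Finset.univ.image x with hX
  set Yset : ℝ → Finset ℝ := fun p => (Finset.univ.filter (fun i => x i = p)).image y with hY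
  -- membership facts
  have hXmem : ∀ p ∈ X, p ∈ Set.Ico (0:ℝ) 1 := by
    intro p hp
    obtain ⟨i, _, rfl⟩ := Finset.mem_image.mp hp
    exact hx i
  have hYmem : ∀ p, ∀ q ∈ Yset p, q ∈ Set.Ico (0:ℝ) 1 := by
    intro p q hq
    obtain ⟨i, _, rfl⟩ := Finset.mem_image.mp hq
    exact hy i
  have hGnot : ∀ p q, (¬ ∃ i, x i = p ∧ y i = q) → G p q = 0 := by
    intro p q h
    rw [hG]
    have : Finset.univ.filter (fun i => x i = p ∧ y i = q) = ∅ := by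
      rw [Finset.filter_eq_empty_iff]
      intro i _ hi
      exact h ⟨i, hi⟩
    simp [this]
  -- total count
  have htot : ∑ p ∈ X, (Yset p).card ≤ 2 * N := by
    calc ∑ p ∈ X, (Yset p).card
        ≤ ∑ p ∈ X, (Finset.univ.filter (fun i => x i = p)).card :=
          Finset.sum_le_sum (fun p _ => Finset.card_image_le)
      _ = Finset.univ.card := (Finset.card_eq_sum_card_fiberwise
            (fun i _ => Finset.mem_image_of_mem x (Finset.mem_univ i))).symm
      _ ≤ 2 * N := hcard
  -- the d-coefficients
  set d : ℝ → ℕ → ℂ := fun p n => ∑ q ∈ Yset p, G p q * eu q ^ n with hd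
  -- regrouping identity
  have hregroup : ∀ m n : ℕ, ∑ i, w i * eu (x i) ^ m * eu (y i) ^ n
      = ∑ p ∈ X, d p n * eu p ^ m := by
    intro m n
    rw [← Finset.sum_fiberwise_of_maps_to (g := x) (t := X)
      (fun i _ => Finset.mem_image_of_mem x (Finset.mem_univ i))
      (fun i => w i * eu (x i) ^ m * eu (y i) ^ n)]
    apply Finset.sum_congr rfl
    intro p _
    have inner : ∀ i ∈ Finset.univ.filter (fun i => x i = p),
        w i * eu (x i) ^ m * eu (y i) ^ n = (w i * eu (y i) ^ n) * eu p ^ m := by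
      intro i hi
      rw [(Finset.mem_filter.mp hi).2]
      ring
    rw [Finset.sum_congr rfl inner, ← Finset.sum_mul]
    congr 1
    -- now regroup by y inside fiber p
    rw [← Finset.sum_fiberwise_of_maps_to (g := y) (t := Yset p)
      (fun i hi => Finset.mem_image_of_mem y hi)
      (fun i => w i * eu (y i) ^ n)]
    apply Finset.sum_congr rfl
    intro q _
    have inner2 : ∀ i ∈ (Finset.univ.filter (fun i => x i = p)).filter (fun i => y i = q),
        w i * eu (y i) ^ n = w i * eu q ^ n := by
      intro i hi
      rw [(Finset.mem_filter.mp hi).2]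
    rw [Finset.sum_congr rfl inner2, ← Finset.sum_mul]
    congr 1
    rw [hG, Finset.filter_filter]
  -- main induction
  have main : ∀ S : Finset ℝ, S ⊆ X → (∀ p, p ∉ S → ∀ q, G p q = 0) →
      ∀ p q, G p q = 0 := by
    intro S
    induction S using Finset.strongInduction with
    | _ S ih =>
      intro hSX h0
      rcases S.eq_empty_or_nonempty with rfl | hS
      · intro p q; exact h0 p (Finset.notMem_empty p) q
      obtain ⟨x₀, hx₀S, hmin⟩ := S.exists_min_image (fun p => (Yset p).card) hS
      set q₀ := (Yset x₀).card with hq₀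
      set k := S.card with hk
      have hk1 : 1 ≤ k := Finset.card_pos.mpr hS
      have hq₀1 : 1 ≤ q₀ := by
        obtain ⟨i, _, rfl⟩ := Finset.mem_image.mp (hSX hx₀S)
        apply Finset.card_pos.mpr
        exact ⟨y i, Finset.mem_image_of_mem y (Finset.mem_filter.mpr ⟨Finset.mem_univ i, rfl⟩)⟩
      have hkq : k * q₀ ≤ 2 * N := by
        calc k * q₀ = ∑ _p ∈ S, q₀ := by rw [Finset.sum_const, smul_eq_mul]
          _ ≤ ∑ p ∈ S, (Yset p).card := Finset.sum_le_sum (fun p hp => hmin p hp)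
          _ ≤ ∑ p ∈ X, (Yset p).card := Finset.sum_le_sum_of_subset hSX
          _ ≤ 2 * N := htot
      have hq₀2N : q₀ ≤ 2 * N := le_trans (Nat.le_mul_of_pos_left q₀ hk1) hkq
      -- sample membership
      have hmem : ∀ m n : ℕ, 1 ≤ m → m ≤ k → 1 ≤ n → n ≤ q₀ →
          (m, n) ∈ sampSet (2 * N) 1 := by
        intro m n hm1 hmk hn1 hnq
        rw [sampSet, Finset.mem_biUnion]
        refine ⟨q₀, Finset.mem_Icc.mpr ⟨hq₀1, hq₀2N⟩, ?_⟩
        rw [Finset.mem_product]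
        constructor
        · rw [Finset.mem_range]
          have : k ≤ 2 * N / q₀ := (Nat.le_div_iff_mul_le hq₀1).mpr hkq
          omega
        · rw [Finset.mem_range]; omega
      -- first Vandermonde: over S
      have hdzero : ∀ n : ℕ, 1 ≤ n → n ≤ q₀ → ∀ p ∈ S, d p n = 0 := by
        intro n hn1 hnq
        apply vand_finset S eu ((eu_injOn).mono (fun p hp => hXmem p (hSX hp)))
          (fun p _ => eu_ne_zero p)
        intro m hm1 hmk
        have hsum : ∑ p ∈ S, d p n * eu p ^ m = ∑ p ∈ X, d p n * eu p ^ m := by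
          apply Finset.sum_subset hSX
          intro p hpX hpS
          have : d p n = 0 := by
            rw [hd]
            apply Finset.sum_eq_zero
            intro q _
            rw [h0 p hpS q, zero_mul]
          rw [this, zero_mul]
        rw [hsum, ← hregroup m n, hvan m n hm1 hn1 (hmem m n hm1 hmk hn1 hnq)]
      -- second Vandermonde: over Yset x₀
      have hGx₀ : ∀ q, G x₀ q = 0 := by
        have hYv : ∀ q ∈ Yset x₀, G x₀ q = 0 := by
          apply vand_finset (Yset x₀) eu ((eu_injOn).mono (fun q hq => hYmem x₀ q hq))
            (fun q _ => eu_ne_zero q)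
          intro n hn1 hnq
          have := hdzero n hn1 hnq x₀ hx₀S
          rw [hd] at this
          exact this
        intro q
        by_cases hq : q ∈ Yset x₀
        · exact hYv q hq
        · apply hGnot
          rintro ⟨i, hxi, hyi⟩
          exact hq (Finset.mem_image.mpr ⟨i, Finset.mem_filter.mpr
            ⟨Finset.mem_univ i, hxi⟩, hyi⟩)
      -- recurse
      apply ih (S.erase x₀) (Finset.erase_ssubset hx₀S)
        (fun p hp => hSX (Finset.erase_subset x₀ S hp))
      intro p hp q
      by_cases hpx₀ : p = x₀
      · rw [hpx₀]; exact hGx₀ q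
      · exact h0 p (fun hpS => hp (Finset.mem_erase.mpr ⟨hpx₀, hpS⟩)) q
  intro p q
  apply main X (Finset.Subset.refl X)
  intro p' hp' q'
  apply hGnot
  rintro ⟨i, hxi, _⟩
  exact hp' (Finset.mem_image.mpr ⟨i, Finset.mem_univ i, hxi⟩)

lemma int1d' (a b : ℝ) (hab : a ≤ b) (c : ℂ) (hc : c ≠ 0) :
    ∫ x in Set.Icc a b, Complex.exp (c * x) = (Complex.exp (c*b) - Complex.exp (c*a)) / c := by
  rw [MeasureTheory.integral_Icc_eq_integral_Ioc, ← intervalIntegral.integral_of_le hab,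
    integral_exp_mul_complex hc]

lemma indicator_eq (a b a' b' : ℝ) (s t : ℝ) (c : ℂ) :
    (fun x : ℝ × ℝ => c * Set.indicator (Set.Icc a b ×ˢ Set.Icc a' b') (fun _ => (1:ℂ)) x *
      Complex.exp (-(2 * Real.pi * Complex.I * (x.1 * s + x.2 * t))))
    = Set.indicator (Set.Icc a b ×ˢ Set.Icc a' b')
        (fun x : ℝ × ℝ => c * Complex.exp (-(2 * Real.pi * Complex.I * (x.1 * s + x.2 * t)))) := by
  ext x
  simp only [Set.indicator]
  split <;> simp

lemma integrable_rect (a b a' b' : ℝ) (c : ℂ) (s t : ℝ) :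
    MeasureTheory.Integrable (fun x : ℝ × ℝ =>
      c * Set.indicator (Set.Icc a b ×ˢ Set.Icc a' b') (fun _ => (1:ℂ)) x *
      Complex.exp (-(2 * Real.pi * Complex.I * (x.1 * s + x.2 * t)))) := by
  rw [indicator_eq]
  apply MeasureTheory.IntegrableOn.integrable_indicator _ (measurableSet_Icc.prod measurableSet_Icc)
  apply ContinuousOn.integrableOn_compact (isCompact_Icc.prod isCompact_Icc)
  apply Continuous.continuousOn
  fun_prop

lemma rectFT (a b a' b' : ℝ) (hab : a ≤ b) (hab' : a' ≤ b') (s t : ℝ) (hs : s ≠ 0) (ht : t ≠ 0)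
    (c : ℂ) :
    (∫ x : ℝ × ℝ, c * Set.indicator (Set.Icc a b ×ˢ Set.Icc a' b') (fun _ => (1:ℂ)) x *
      Complex.exp (-(2 * Real.pi * Complex.I * (x.1 * s + x.2 * t))))
    = c * ((Complex.exp (-(2*Real.pi*Complex.I*s) * b) - Complex.exp (-(2*Real.pi*Complex.I*s) * a)) / (-(2*Real.pi*Complex.I*s))) *
      ((Complex.exp (-(2*Real.pi*Complex.I*t) * b') - Complex.exp (-(2*Real.pi*Complex.I*t) * a')) / (-(2*Real.pi*Complex.I*t))) := by
  have hmeas : MeasurableSet (Set.Icc a b ×ˢ Set.Icc a' b') :=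
    (measurableSet_Icc.prod measurableSet_Icc)
  rw [indicator_eq, MeasureTheory.integral_indicator hmeas]
  have h2 : ∀ x : ℝ × ℝ, c * Complex.exp (-(2 * Real.pi * Complex.I * (x.1 * s + x.2 * t)))
      = (c * Complex.exp (-(2*Real.pi*Complex.I*s) * x.1)) * Complex.exp (-(2*Real.pi*Complex.I*t) * x.2) := by
    intro x
    conv_rhs => rw [mul_assoc, ← Complex.exp_add]
    congr 1
    push_cast
    ring_nf
  simp_rw [h2]
  rw [MeasureTheory.Measure.volume_eq_prod ℝ ℝ]
  rw [MeasureTheory.setIntegral_prod_mul (fun u : ℝ => c * Complex.exp (-(2*Real.pi*Complex.I*s) * u))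
    (fun u : ℝ => Complex.exp (-(2*Real.pi*Complex.I*t) * u))]
  rw [MeasureTheory.integral_const_mul,
      int1d' a b hab _ (by simp [Real.pi_ne_zero, Complex.I_ne_zero, hs]),
      int1d' a' b' hab' _ (by simp [Real.pi_ne_zero, Complex.I_ne_zero, ht])]

lemma ftSum_eval (k : ℕ) (c : Fin k → ℂ) (a b a' b' : Fin k → ℝ)
    (hab : ∀ j, a j ≤ b j) (hab' : ∀ j, a' j ≤ b' j)
    (s t : ℝ) (hs : s ≠ 0) (ht : t ≠ 0) :
    fourierTransform2 (fun x => ∑ j, c j *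
        Set.indicator (Set.Icc (a j) (b j) ×ˢ Set.Icc (a' j) (b' j)) (fun _ => (1:ℂ)) x) (s, t)
    = ∑ j, c j *
      ((Complex.exp (-(2*Real.pi*Complex.I*s) * b j) - Complex.exp (-(2*Real.pi*Complex.I*s) * a j)) / (-(2*Real.pi*Complex.I*s))) *
      ((Complex.exp (-(2*Real.pi*Complex.I*t) * b' j) - Complex.exp (-(2*Real.pi*Complex.I*t) * a' j)) / (-(2*Real.pi*Complex.I*t))) := by
  rw [fourierTransform2]
  have h1 : ∀ x : ℝ × ℝ, (∑ j, c j *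
        Set.indicator (Set.Icc (a j) (b j) ×ˢ Set.Icc (a' j) (b' j)) (fun _ => (1:ℂ)) x) *
        Complex.exp (-(2 * Real.pi * Complex.I * (x.1 * s + x.2 * t)))
      = ∑ j, c j * Set.indicator (Set.Icc (a j) (b j) ×ˢ Set.Icc (a' j) (b' j)) (fun _ => (1:ℂ)) x *
        Complex.exp (-(2 * Real.pi * Complex.I * (x.1 * s + x.2 * t))) := by
    intro x; rw [Finset.sum_mul]
  simp_rw [h1]
  rw [MeasureTheory.integral_finset_sum _ (fun j _ => integrable_rect (a j) (b j) (a' j) (b' j) (c j) s t)]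
  exact Finset.sum_congr rfl fun j _ => rectFT (a j) (b j) (a' j) (b' j) (hab j) (hab' j) s t hs ht (c j)

lemma eu_pow' (x : ℝ) (m : ℕ) : eu x ^ m = Complex.exp (-(2*Real.pi*Complex.I*((m:ℝ):ℂ)) * x) := by
  rw [eu, ← Complex.exp_nat_mul]
  congr 1
  push_cast
  ring

lemma ind1 (a b x : ℝ) (hxa : x ≠ a) (hxb : x ≠ b) (hab : a < b) :
    (if a ≤ x ∧ x ≤ b then (1:ℂ) else 0)
      = (if a ≤ x then (1:ℂ) else 0) - (if b ≤ x then (1:ℂ) else 0) := by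
  rcases le_or_gt a x with h|h
  · rcases le_or_gt b x with hb|hb
    · have hxb' : ¬ x ≤ b := not_le.mpr (lt_of_le_of_ne hb (Ne.symm hxb))
      simp [h, hb, hxb']
    · simp [h, hb.le, not_le.mpr hb]
  · have h1 : ¬ a ≤ x := not_le.mpr h
    have h2 : ¬ b ≤ x := not_le.mpr (h.trans hab)
    simp [h1, h2]

lemma ind_pair (a b a' b' zx zy : ℝ) (hab : a < b) (hab' : a' < b')
    (h1 : zx ≠ a) (h2 : zx ≠ b) (h3 : zy ≠ a') (h4 : zy ≠ b') :
    Set.indicator (Set.Icc a b ×ˢ Set.Icc a' b') (fun _ => (1:ℂ)) (zx, zy)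
    = ((if a ≤ zx then (1:ℂ) else 0) - (if b ≤ zx then (1:ℂ) else 0)) *
      ((if a' ≤ zy then (1:ℂ) else 0) - (if b' ≤ zy then (1:ℂ) else 0)) := by
  rw [← ind1 a b zx h1 h2 hab, ← ind1 a' b' zy h3 h4 hab']
  rw [Set.indicator_apply]
  simp only [Set.mem_prod, Set.mem_Icc]
  by_cases hP : a ≤ zx ∧ zx ≤ b <;> by_cases hQ : a' ≤ zy ∧ zy ≤ b' <;> simp [hP, hQ]


/-- Two finite linear combinations of indicator functions of axis-parallel
closed rectangles contained in `[0,1)²`, each involving at most `N` rectangle vertices in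
total (`4nᵢ ≤ N`), whose Fourier transforms agree on the sampling set `A_{2N}(1)`, are equal
almost everywhere on `ℝ²`. -/
theorem rectangle_sum_determined_by_fourier_samples (N : ℕ) (hN : 0 < N)
    (n₁ n₂ : ℕ) (hn₁ : 4 * n₁ ≤ N) (hn₂ : 4 * n₂ ≤ N)
    (c₁ : Fin n₁ → ℂ) (c₂ : Fin n₂ → ℂ)
    (a₁ b₁ a₁' b₁' : Fin n₁ → ℝ) (a₂ b₂ a₂' b₂' : Fin n₂ → ℝ)
    (hr₁ : ∀ j, 0 ≤ a₁ j ∧ a₁ j < b₁ j ∧ b₁ j < 1 ∧ 0 ≤ a₁' j ∧ a₁' j < b₁' j ∧ b₁' j < 1)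
    (hr₂ : ∀ j, 0 ≤ a₂ j ∧ a₂ j < b₂ j ∧ b₂ j < 1 ∧ 0 ≤ a₂' j ∧ a₂' j < b₂' j ∧ b₂' j < 1)
    (f₁ f₂ : ℝ × ℝ → ℂ)
    (hf₁ : f₁ = fun x => ∑ j, c₁ j *
      Set.indicator (Set.Icc (a₁ j) (b₁ j) ×ˢ Set.Icc (a₁' j) (b₁' j)) (fun _ => (1 : ℂ)) x)
    (hf₂ : f₂ = fun x => ∑ j, c₂ j *
      Set.indicator (Set.Icc (a₂ j) (b₂ j) ×ˢ Set.Icc (a₂' j) (b₂' j)) (fun _ => (1 : ℂ)) x)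
    (hsamp : ∀ mn ∈ sampSet (2 * N) 1,
      fourierTransform2 f₁ ((mn.1 : ℝ), (mn.2 : ℝ)) =
      fourierTransform2 f₂ ((mn.1 : ℝ), (mn.2 : ℝ))) :
    f₁ =ᵐ[MeasureTheory.volume] f₂ := by
  classical
  subst hf₁ hf₂
  set xc : (Fin n₁ ⊕ Fin n₂) × Bool × Bool → ℝ := fun i =>
    Sum.elim (fun j => cond i.2.1 (a₁ j) (b₁ j)) (fun j => cond i.2.1 (a₂ j) (b₂ j)) i.1
    with hxc
  set yc : (Fin n₁ ⊕ Fin n₂) × Bool × Bool → ℝ := fun i =>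
    Sum.elim (fun j => cond i.2.2 (a₁' j) (b₁' j)) (fun j => cond i.2.2 (a₂' j) (b₂' j)) i.1
    with hyc
  set wv : (Fin n₁ ⊕ Fin n₂) × Bool × Bool → ℂ := fun i =>
    Sum.elim (fun j => (cond i.2.1 (1:ℂ) (-1)) * (cond i.2.2 (1:ℂ) (-1)) * c₁ j)
      (fun j => -((cond i.2.1 (1:ℂ) (-1)) * (cond i.2.2 (1:ℂ) (-1)) * c₂ j)) i.1
    with hwv
  -- the key expansion identity
  have hexpand : ∀ (F G : ℝ → ℂ), (∑ i, wv i * F (xc i) * G (yc i))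
      = (∑ j, c₁ j * (F (a₁ j) - F (b₁ j)) * (G (a₁' j) - G (b₁' j)))
        - ∑ j, c₂ j * (F (a₂ j) - F (b₂ j)) * (G (a₂' j) - G (b₂' j)) := by
    intro F G
    rw [sub_eq_add_neg, ← Finset.sum_neg_distrib]
    simp only [hxc, hyc, hwv, Fintype.sum_prod_type, Fintype.sum_sum_type, Fintype.sum_bool,
      Sum.elim_inl, Sum.elim_inr, Bool.cond_true, Bool.cond_false]
    congr 1 <;> · apply Finset.sum_congr rfl; intro j _; ring
  have hx : ∀ i, xc i ∈ Set.Ico (0:ℝ) 1 := by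
    rintro ⟨j | j, s, t⟩ <;> cases s
    · obtain ⟨h1, h2, h3, _⟩ := hr₁ j
      simp only [hxc, Sum.elim_inl, Bool.cond_false]
      exact Set.mem_Ico.mpr ⟨by linarith, by linarith⟩
    · obtain ⟨h1, h2, h3, _⟩ := hr₁ j
      simp only [hxc, Sum.elim_inl, Bool.cond_true]
      exact Set.mem_Ico.mpr ⟨by linarith, by linarith⟩
    · obtain ⟨h1, h2, h3, _⟩ := hr₂ j
      simp only [hxc, Sum.elim_inr, Bool.cond_false]
      exact Set.mem_Ico.mpr ⟨by linarith, by linarith⟩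
    · obtain ⟨h1, h2, h3, _⟩ := hr₂ j
      simp only [hxc, Sum.elim_inr, Bool.cond_true]
      exact Set.mem_Ico.mpr ⟨by linarith, by linarith⟩
  have hy : ∀ i, yc i ∈ Set.Ico (0:ℝ) 1 := by
    rintro ⟨j | j, s, t⟩ <;> cases t
    · obtain ⟨_, _, _, h1, h2, h3⟩ := hr₁ j
      simp only [hyc, Sum.elim_inl, Bool.cond_false]
      exact Set.mem_Ico.mpr ⟨by linarith, by linarith⟩
    · obtain ⟨_, _, _, h1, h2, h3⟩ := hr₁ j
      simp only [hyc, Sum.elim_inl, Bool.cond_true]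
      exact Set.mem_Ico.mpr ⟨by linarith, by linarith⟩
    · obtain ⟨_, _, _, h1, h2, h3⟩ := hr₂ j
      simp only [hyc, Sum.elim_inr, Bool.cond_false]
      exact Set.mem_Ico.mpr ⟨by linarith, by linarith⟩
    · obtain ⟨_, _, _, h1, h2, h3⟩ := hr₂ j
      simp only [hyc, Sum.elim_inr, Bool.cond_true]
      exact Set.mem_Ico.mpr ⟨by linarith, by linarith⟩
  have hcard : Fintype.card ((Fin n₁ ⊕ Fin n₂) × Bool × Bool) ≤ 2 * N := by
    simp only [Fintype.card_prod, Fintype.card_sum, Fintype.card_fin, Fintype.card_bool]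
    omega
  have hvan : ∀ m n : ℕ, 1 ≤ m → 1 ≤ n → (m, n) ∈ sampSet (2 * N) 1 →
      ∑ i, wv i * eu (xc i) ^ m * eu (yc i) ^ n = 0 := by
    intro m n hm hn hmem
    have hm0 : m ≠ 0 := by omega
    have hn0 : n ≠ 0 := by omega
    have hms : ((m:ℝ)) ≠ 0 := Nat.cast_ne_zero.mpr hm0
    have hns : ((n:ℝ)) ≠ 0 := Nat.cast_ne_zero.mpr hn0
    have heq := hsamp (m, n) hmem
    rw [ftSum_eval n₁ c₁ a₁ b₁ a₁' b₁' (fun j => (hr₁ j).2.1.le) (fun j => (hr₁ j).2.2.2.2.1.le)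
          (m:ℝ) (n:ℝ) hms hns,
        ftSum_eval n₂ c₂ a₂ b₂ a₂' b₂' (fun j => (hr₂ j).2.1.le) (fun j => (hr₂ j).2.2.2.2.1.le)
          (m:ℝ) (n:ℝ) hms hns] at heq
    set cs : ℂ := -(2*Real.pi*Complex.I*((m:ℝ):ℂ)) with hcs
    set ct : ℂ := -(2*Real.pi*Complex.I*((n:ℝ):ℂ)) with hct
    have hcs0 : cs ≠ 0 := by
      simp [hcs, Real.pi_ne_zero, Complex.I_ne_zero, hm0]
    have hct0 : ct ≠ 0 := by
      simp [hct, Real.pi_ne_zero, Complex.I_ne_zero, hn0]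
    have step1 : ∑ i, wv i * eu (xc i) ^ m * eu (yc i) ^ n
        = ∑ i, wv i * Complex.exp (cs * xc i) * Complex.exp (ct * yc i) := by
      apply Finset.sum_congr rfl
      intro i _
      rw [eu_pow', eu_pow']
    have e₁ : ∑ j, c₁ j * (Complex.exp (cs * a₁ j) - Complex.exp (cs * b₁ j)) *
          (Complex.exp (ct * a₁' j) - Complex.exp (ct * b₁' j))
        = cs * ct * ∑ j, c₁ j * ((Complex.exp (cs * b₁ j) - Complex.exp (cs * a₁ j)) / cs) *
          ((Complex.exp (ct * b₁' j) - Complex.exp (ct * a₁' j)) / ct) := by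
      rw [Finset.mul_sum]
      apply Finset.sum_congr rfl
      intro j _
      field_simp
      ring
    have e₂ : ∑ j, c₂ j * (Complex.exp (cs * a₂ j) - Complex.exp (cs * b₂ j)) *
          (Complex.exp (ct * a₂' j) - Complex.exp (ct * b₂' j))
        = cs * ct * ∑ j, c₂ j * ((Complex.exp (cs * b₂ j) - Complex.exp (cs * a₂ j)) / cs) *
          ((Complex.exp (ct * b₂' j) - Complex.exp (ct * a₂' j)) / ct) := by
      rw [Finset.mul_sum]
      apply Finset.sum_congr rfl
      intro j _
      field_simp
      ring
    rw [step1, hexpand (fun u => Complex.exp (cs * u)) (fun u => Complex.exp (ct * u)), e₁, e₂,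
      heq]
    ring
  have hker := core N xc yc wv hx hy hcard hvan
  -- measure-zero bad set
  set FxS : Set ℝ := Set.range a₁ ∪ Set.range b₁ ∪ Set.range a₂ ∪ Set.range b₂ with hFxS
  set FyS : Set ℝ := Set.range a₁' ∪ Set.range b₁' ∪ Set.range a₂' ∪ Set.range b₂' with hFyS
  have hFxfin : FxS.Finite :=
    (((Set.finite_range a₁).union (Set.finite_range b₁)).union (Set.finite_range a₂)).union
      (Set.finite_range b₂)
  have hFyfin : FyS.Finite :=
    (((Set.finite_range a₁').union (Set.finite_range b₁')).union (Set.finite_range a₂')).union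
      (Set.finite_range b₂')
  have hbad : MeasureTheory.volume {z : ℝ × ℝ | z.1 ∈ FxS ∨ z.2 ∈ FyS} = 0 := by
    have hsub : {z : ℝ × ℝ | z.1 ∈ FxS ∨ z.2 ∈ FyS} ⊆
        (FxS ×ˢ (Set.univ : Set ℝ)) ∪ ((Set.univ : Set ℝ) ×ˢ FyS) := by
      rintro z (hz | hz)
      · exact Or.inl ⟨hz, trivial⟩
      · exact Or.inr ⟨trivial, hz⟩
    apply MeasureTheory.measure_mono_null hsub
    apply MeasureTheory.measure_union_null
    · rw [MeasureTheory.Measure.volume_eq_prod ℝ ℝ, MeasureTheory.Measure.prod_prod,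
        hFxfin.measure_zero, zero_mul]
    · rw [MeasureTheory.Measure.volume_eq_prod ℝ ℝ, MeasureTheory.Measure.prod_prod,
        hFyfin.measure_zero, mul_zero]
  have hae : ∀ᵐ z : ℝ × ℝ ∂MeasureTheory.volume, z ∉ {z : ℝ × ℝ | z.1 ∈ FxS ∨ z.2 ∈ FyS} :=
    (MeasureTheory.measure_eq_zero_iff_ae_notMem).mp hbad
  filter_upwards [hae] with z hz
  simp only [Set.mem_setOf_eq, not_or] at hz
  obtain ⟨hzx, hzy⟩ := hz
  obtain ⟨zx, zy⟩ := z
  simp only [hFxS, hFyS, Set.mem_union, not_or, Set.mem_range, not_exists] at hzx hzy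
  obtain ⟨⟨⟨hza₁, hzb₁⟩, hza₂⟩, hzb₂⟩ := hzx
  obtain ⟨⟨⟨hza₁', hzb₁'⟩, hza₂'⟩, hzb₂'⟩ := hzy
  rw [← sub_eq_zero]
  have hrep : (∑ j, c₁ j * Set.indicator (Set.Icc (a₁ j) (b₁ j) ×ˢ Set.Icc (a₁' j) (b₁' j))
        (fun _ => (1:ℂ)) (zx, zy))
      - (∑ j, c₂ j * Set.indicator (Set.Icc (a₂ j) (b₂ j) ×ˢ Set.Icc (a₂' j) (b₂' j))
        (fun _ => (1:ℂ)) (zx, zy))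
      = ∑ i, wv i * (if xc i ≤ zx then (1:ℂ) else 0) * (if yc i ≤ zy then (1:ℂ) else 0) := by
    rw [hexpand (fun u => if u ≤ zx then (1:ℂ) else 0) (fun u => if u ≤ zy then (1:ℂ) else 0)]
    congr 1
    · apply Finset.sum_congr rfl
      intro j _
      rw [ind_pair (a₁ j) (b₁ j) (a₁' j) (b₁' j) zx zy (hr₁ j).2.1 (hr₁ j).2.2.2.2.1
        (fun h => hza₁ j h.symm) (fun h => hzb₁ j h.symm) (fun h => hza₁' j h.symm)
        (fun h => hzb₁' j h.symm)]
      ring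
    · apply Finset.sum_congr rfl
      intro j _
      rw [ind_pair (a₂ j) (b₂ j) (a₂' j) (b₂' j) zx zy (hr₂ j).2.1 (hr₂ j).2.2.2.2.1
        (fun h => hza₂ j h.symm) (fun h => hzb₂ j h.symm) (fun h => hza₂' j h.symm)
        (fun h => hzb₂' j h.symm)]
      ring
  rw [hrep]
  -- group by vertex and use hker
  rw [← Finset.sum_fiberwise_of_maps_to (g := fun i => (xc i, yc i))
    (t := Finset.univ.image (fun i => (xc i, yc i)))
    (fun i _ => Finset.mem_image_of_mem _ (Finset.mem_univ i))
    (fun i => wv i * (if xc i ≤ zx then (1:ℂ) else 0) * (if yc i ≤ zy then (1:ℂ) else 0))]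
  apply Finset.sum_eq_zero
  intro pq _
  have hconst : ∀ i ∈ Finset.univ.filter (fun i => (xc i, yc i) = pq),
      wv i * (if xc i ≤ zx then (1:ℂ) else 0) * (if yc i ≤ zy then (1:ℂ) else 0)
      = wv i * ((if pq.1 ≤ zx then (1:ℂ) else 0) * (if pq.2 ≤ zy then (1:ℂ) else 0)) := by
    intro i hi
    have h := (Finset.mem_filter.mp hi).2
    have h1 : xc i = pq.1 := congrArg Prod.fst h
    have h2 : yc i = pq.2 := congrArg Prod.snd h
    rw [h1, h2]
    ring
  rw [Finset.sum_congr rfl hconst, ← Finset.sum_mul]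
  have hfilter : Finset.univ.filter (fun i => (xc i, yc i) = pq)
      = Finset.univ.filter (fun i => xc i = pq.1 ∧ yc i = pq.2) := by
    apply Finset.filter_congr
    intro i _
    simp [Prod.ext_iff]
  rw [hfilter, hker pq.1 pq.2, zero_mul]
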